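/- Let W be the Banach space C([0,T];ℝ^d) with the sup norm and V_ν := {η ∈ W : η has bounded variation and ‖η‖_BV ≤ ν}. Define Λ : W × W → C([0,T];ℝ) by Λ(x, η)(t) := ∫_0^t ⟨x(s), dη(s)⟩ if η has bounded variation, and Λ(x, η) := 0 otherwise. Then for each ν > 0, the restriction of Λ to W × V_ν is continuous. -/

import Mathlib

open MeasureTheory Set Filter Topology
open scoped ENNReal Classical

noncomputable section

/-- The Lebesgue–Stieltjes measure associated to a monotone function (zero measure otherwise). -/
def lsMeasure (f : ℝ → ℝ) : Measure ℝ :=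
  if h : Monotone f then h.stieltjesFunction.measure else 0

/-- Total variation of `η` on `[0, min (max t 0) T]`, as a real number. -/
def varFun (T : ℝ) (η : ℝ → ℝ) (t : ℝ) : ℝ :=
  (eVariationOn η (Icc 0 (min (max t 0) T))).toReal

/-- `η` clamped to its values on `[0,T]`. -/
def clampFun (T : ℝ) (η : ℝ → ℝ) (t : ℝ) : ℝ := η (min (max t 0) T)

/-- The Lebesgue–Stieltjes integral `∫_0^t x dη` of a scalar function `x` against a
(right-continuous) function `η` of bounded variation on `[0,T]`, defined through the
Jordan decomposition `η = (v + η) - v` where `v` is the variation function of `η`. -/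
def stieltjesIntegral1 (T : ℝ) (x : ℝ → ℝ) (η : ℝ → ℝ) (t : ℝ) : ℝ :=
  (∫ s in Ioc 0 t, x s ∂(lsMeasure (fun u => varFun T η u + clampFun T η u))) -
    ∫ s in Ioc 0 t, x s ∂(lsMeasure (varFun T η))

/-- The coordinatewise Lebesgue–Stieltjes integral `∫_0^t ⟨x(s), dη(s)⟩` for
`ℝ^d`-valued `x` and `η`. -/
def stieltjesIntegral (T : ℝ) {d : ℕ} (x η : ℝ → EuclideanSpace ℝ (Fin d)) (t : ℝ) : ℝ :=
  ∑ i, stieltjesIntegral1 T (fun s => x s i) (fun s => η s i) t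

/-- The BV norm `‖η‖_BV = |η(0)| + V_0^T(η)`. -/
def bvNorm (T : ℝ) {E : Type*} [NormedAddCommGroup E] (η : ℝ → E) : ℝ :=
  ‖η 0‖ + (eVariationOn η (Icc 0 T)).toReal


/-- The BV norm `‖f‖_BV = |f(0)| + V_0^T(f)` of a continuous path `f : [0,T] → E`. -/
def bvNormC {T : ℝ} (hT : (0:ℝ) ≤ T) {E : Type*} [NormedAddCommGroup E]
    (f : C(Icc (0:ℝ) T, E)) : ℝ :=
  ‖f ⟨0, left_mem_Icc.mpr hT⟩‖ + (eVariationOn f (univ : Set (Icc (0:ℝ) T))).toReal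

/-- The map `Λ(x, η) := (t ↦ ∫_0^t ⟨x(s), dη(s)⟩)`, as a continuous path whenever the
Stieltjes integral defines one (so in particular whenever `η` is continuous of bounded
variation), and `0` otherwise. -/
def lambdaMap {T : ℝ} (hT : (0:ℝ) ≤ T) {d : ℕ}
    (f g : C(Icc (0:ℝ) T, EuclideanSpace ℝ (Fin d))) : C(Icc (0:ℝ) T, ℝ) :=
  if h : ∃ z : C(Icc (0:ℝ) T, ℝ), ∀ t : Icc (0:ℝ) T,
      z t = stieltjesIntegral T (IccExtend hT f) (IccExtend hT g) t
  then h.choose else 0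

-- auxiliary
def clmp (T t : ℝ) : ℝ := min (max t 0) T

lemma clmp_mem {T : ℝ} (hT : 0 ≤ T) (t : ℝ) : clmp T t ∈ Icc 0 T :=
  ⟨le_min (le_max_right t 0) hT, min_le_right _ _⟩

lemma clmp_mono {T : ℝ} : Monotone (clmp T) := fun a b h =>
  min_le_min (max_le_max h le_rfl) le_rfl

lemma clmp_of_mem {T t : ℝ} (ht : t ∈ Icc 0 T) : clmp T t = t := by
  simp [clmp, max_eq_left ht.1, min_eq_left ht.2]

lemma varFun_eq (T : ℝ) (η : ℝ → ℝ) (t : ℝ) :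
    varFun T η t = (eVariationOn η (Icc 0 (clmp T t))).toReal := rfl

lemma clampFun_eq (T : ℝ) (η : ℝ → ℝ) (t : ℝ) : clampFun T η t = η (clmp T t) := rfl

section scalar

variable {T : ℝ} (hT : 0 ≤ T) {η : ℝ → ℝ}
  (hfin : eVariationOn η (Icc 0 T) ≠ ⊤)

include hT hfin

lemma evar_sub_fin {a b : ℝ} (ha : a ∈ Icc 0 T) (hb : b ∈ Icc 0 T) :
    eVariationOn η (Icc a b) ≠ ⊤ :=
  fun h => hfin (top_le_iff.mp (h ▸ eVariationOn.mono η (Icc_subset_Icc ha.1 hb.2)))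

lemma varFun_add (s t : ℝ) (hst : s ≤ t) :
    varFun T η t = varFun T η s + (eVariationOn η (Icc (clmp T s) (clmp T t))).toReal := by
  have h1 : (0:ℝ) ≤ clmp T s := (clmp_mem hT s).1
  have h2 : clmp T s ≤ clmp T t := clmp_mono hst
  have key := eVariationOn.Icc_add_Icc η (s := (univ : Set ℝ)) h1 h2 (mem_univ _)
  simp only [univ_inter] at key
  rw [varFun_eq, varFun_eq, ← ENNReal.toReal_add (evar_sub_fin hT hfin ⟨le_rfl, hT⟩ (clmp_mem hT s))
    (evar_sub_fin hT hfin (clmp_mem hT s) (clmp_mem hT t)), key]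

lemma varFun_mono : Monotone (varFun T η) := fun s t hst => by
  rw [varFun_add hT hfin s t hst]
  simpa using ENNReal.toReal_nonneg (a := eVariationOn η (Icc (clmp T s) (clmp T t)))

lemma varFun_zero : varFun T η 0 = 0 := by
  rw [varFun_eq, clmp_of_mem (left_mem_Icc.mpr hT)]
  rw [eVariationOn.subsingleton η (by simp [Icc_self])]; simp

lemma varFun_le (t : ℝ) : varFun T η t ≤ (eVariationOn η (Icc 0 T)).toReal := by
  rw [varFun_eq]
  exact ENNReal.toReal_mono hfin (eVariationOn.mono η (Icc_subset_Icc le_rfl (clmp_mem hT t).2))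

lemma abs_clampFun_sub_le {s t : ℝ} (hst : s ≤ t) :
    |clampFun T η t - clampFun T η s| ≤ varFun T η t - varFun T η s := by
  rw [varFun_add hT hfin s t hst, clampFun_eq, clampFun_eq]
  have h2 : clmp T s ≤ clmp T t := clmp_mono hst
  have := eVariationOn.edist_le η (x := clmp T s) (y := clmp T t)
    (left_mem_Icc.mpr h2) (right_mem_Icc.mpr h2)
  rw [edist_comm, edist_dist, Real.dist_eq] at this
  have hfin' := evar_sub_fin hT hfin (clmp_mem hT s) (clmp_mem hT t)
  calc |η (clmp T t) - η (clmp T s)|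
      = (ENNReal.ofReal |η (clmp T t) - η (clmp T s)|).toReal := by
        rw [ENNReal.toReal_ofReal (abs_nonneg _)]
    _ ≤ (eVariationOn η (Icc (clmp T s) (clmp T t))).toReal := ENNReal.toReal_mono hfin' this
    _ = varFun T η s + (eVariationOn η (Icc (clmp T s) (clmp T t))).toReal - varFun T η s := by ring

lemma varFun_clampFun_mono : Monotone (fun u => varFun T η u + clampFun T η u) := by
  intro s t hst
  have h := abs_clampFun_sub_le hT hfin hst
  have := abs_le.mp h
  simp only []
  linarith [this.1]

end scalar

section stieltjes

lemma stieltjes_eq_add {F c : ℝ → ℝ} (hF : Monotone F) (hFc : Monotone (fun u => F u + c u))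
    (hc : Continuous c) (u : ℝ) :
    hFc.stieltjesFunction u = hF.stieltjesFunction u + c u := by
  rw [Monotone.stieltjesFunction_eq, Monotone.stieltjesFunction_eq]
  have h1 : Tendsto F (𝓝[>] u) (𝓝 (Function.rightLim F u)) := hF.tendsto_rightLim u
  have h2 : Tendsto c (𝓝[>] u) (𝓝 (c u)) := (hc.tendsto u).mono_left nhdsWithin_le_nhds
  exact rightLim_eq_of_tendsto (h1.add h2)

lemma stieltjes_eq_self_of_const_right {F : ℝ → ℝ} (hF : Monotone F) {u : ℝ}
    (h : ∀ s, u ≤ s → F s = F u) : hF.stieltjesFunction u = F u := by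
  rw [Monotone.stieltjesFunction_eq]
  refine rightLim_eq_of_tendsto ?_
  have : F =ᶠ[𝓝[>] u] fun _ => F u :=
    eventually_mem_nhdsWithin.mono (fun s hs => h s (le_of_lt hs))
  exact Tendsto.congr' this.symm tendsto_const_nhds

lemma stieltjes_ge {F : ℝ → ℝ} (hF : Monotone F) (u : ℝ) : F u ≤ hF.stieltjesFunction u :=
  hF.le_rightLim le_rfl

/-- Single-interval estimate for the Stieltjes integral. -/
lemma key_interval (G : StieltjesFunction ℝ) {x : ℝ → ℝ} (hx : Continuous x)
    {a b r c : ℝ} (hab : a ≤ b) (hc : ∀ s ∈ Ioc a b, |x s - x r| ≤ c) :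
    |(∫ s in Ioc a b, x s ∂G.measure) - x r * (G b - G a)| ≤ c * (G b - G a) := by
  have hGfin : G.measure (Ioc a b) < ⊤ := by
    rw [G.measure_Ioc]; exact ENNReal.ofReal_lt_top
  have htR : (G.measure (Ioc a b)).toReal = G b - G a := by
    rw [G.measure_Ioc, ENNReal.toReal_ofReal (sub_nonneg.2 (G.mono hab))]
  have hint : IntegrableOn x (Ioc a b) G.measure := hx.integrableOn_Ioc
  have hconst : IntegrableOn (fun _ => x r) (Ioc a b) G.measure :=
    integrableOn_const hGfin.ne
  have heq : (∫ s in Ioc a b, x s ∂G.measure) - x r * (G b - G a)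
      = ∫ s in Ioc a b, (x s - x r) ∂G.measure := by
    rw [integral_sub hint hconst, setIntegral_const, measureReal_def, htR, smul_eq_mul, mul_comm]
  rw [heq, ← htR]
  have := norm_setIntegral_le_of_norm_le_const (μ := G.measure) (s := Ioc a b)
    (f := fun s => x s - x r) hGfin
    (fun s hs => by simpa [Real.norm_eq_abs] using hc s hs)
  simpa [Real.norm_eq_abs, measureReal_def] using this

/-- Additivity of the set integral over consecutive `Ioc`s. -/
lemma integral_Ioc_split (G : StieltjesFunction ℝ) {x : ℝ → ℝ} (hx : Continuous x)
    {a b c : ℝ} (hab : a ≤ b) (hbc : b ≤ c) :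
    (∫ s in Ioc a c, x s ∂G.measure)
      = (∫ s in Ioc a b, x s ∂G.measure) + ∫ s in Ioc b c, x s ∂G.measure := by
  rw [← Ioc_union_Ioc_eq_Ioc hab hbc]
  refine setIntegral_union ?_ measurableSet_Ioc hx.integrableOn_Ioc hx.integrableOn_Ioc
  rw [Set.Ioc_disjoint_Ioc]
  exact (min_le_left _ _).trans (le_max_right _ _)

end stieltjes

section riemann

/-- Riemann-sum approximation for the integral against a Stieltjes measure. -/
lemma rs_single (G : StieltjesFunction ℝ) {x : ℝ → ℝ} (hx : Continuous x)
    {T t : ℝ} (ht : t ∈ Icc 0 T) {n : ℕ} (hn : 1 ≤ n) {ω : ℝ}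
    (hosc : ∀ s r : ℝ, s ∈ Icc 0 T → r ∈ Icc 0 T → |s - r| ≤ T / n → |x s - x r| ≤ ω) :
    |(∫ s in Ioc 0 t, x s ∂G.measure) - ∑ i ∈ Finset.range n,
        x (T * i / n) * (G (min (T * (i+1) / n) t) - G (min (T * i / n) t))|
      ≤ ω * (G t - G 0) := by
  have hn0 : (0:ℝ) < n := by exact_mod_cast hn
  set u : ℕ → ℝ := fun i => min (T * i / n) t with hu
  have hu0 : u 0 = 0 := by simp [hu, ht.1]
  have hun : u n = t := by
    have : T * n / n = T := by field_simp
    simp [hu, this, ht.2]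
  have humono : Monotone u := by
    intro i j hij
    refine min_le_min ?_ le_rfl
    have : (i:ℝ) ≤ j := by exact_mod_cast hij
    have hTn : 0 ≤ T / n := div_nonneg (ht.1.trans ht.2) hn0.le
    rw [mul_comm T (i:ℝ), mul_comm T (j:ℝ), mul_div_assoc, mul_div_assoc]
    exact mul_le_mul_of_nonneg_right this hTn
  -- split the integral
  have hsplit : ∀ k : ℕ, (∫ s in Ioc (u 0) (u k), x s ∂G.measure)
      = ∑ i ∈ Finset.range k, ∫ s in Ioc (u i) (u (i+1)), x s ∂G.measure := by
    intro k
    induction k with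
    | zero => simp
    | succ k ih =>
        rw [integral_Ioc_split G hx (humono (Nat.zero_le k)) (humono (Nat.le_succ k)), ih,
          Finset.sum_range_succ]
  have hterm : ∀ i ∈ Finset.range n,
      |(∫ s in Ioc (u i) (u (i+1)), x s ∂G.measure)
          - x (T * i / n) * (G (u (i+1)) - G (u i))| ≤ ω * (G (u (i+1)) - G (u i)) := by
    intro i hi
    rw [Finset.mem_range] at hi
    have hT0 : (0:ℝ) ≤ T := ht.1.trans ht.2
    refine key_interval G hx (humono (Nat.le_succ i)) ?_
    intro s hs
    have hui : u i < s := hs.1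
    have hile : T * i / n ≤ t := by
      by_contra hlt
      push_neg at hlt
      have h1 : u i = t := min_eq_right hlt.le
      have h2 : u (i+1) ≤ t := min_le_right _ _
      exact absurd (hui.trans_le hs.2) (by rw [h1]; exact not_lt.2 h2)
    have huieq : u i = T * i / n := min_eq_left hile
    have hs0 : 0 ≤ T * i / n := by positivity
    have hiT : T * i / n ≤ T := by
      rw [div_le_iff₀ hn0]
      have : (i:ℝ) ≤ n := by exact_mod_cast hi.le
      nlinarith [ht.1.trans ht.2]
    refine hosc s (T * i / n) ⟨hs0.trans (huieq ▸ hui.le), hs.2.trans ((min_le_right _ _).trans ht.2)⟩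
      ⟨hs0, hiT⟩ ?_
    have hsu : s ≤ T * ((i:ℝ)+1) / n := by
      have h2 := hs.2
      simp only [hu] at h2
      have := h2.trans (min_le_left _ _)
      push_cast at this
      exact this
    have : T * (i+1) / n - T * i / n = T / n := by field_simp; ring
    rw [abs_le]
    constructor
    · nlinarith [div_nonneg (ht.1.trans ht.2) hn0.le]
    · nlinarith
  have hcast1 : ∀ i : ℕ, min (T * ((i:ℝ)+1) / n) t = u (i+1) := fun i => by
    simp only [hu]; norm_cast
  have hcast0 : ∀ i : ℕ, min (T * (i:ℝ) / n) t = u i := fun i => by simp only [hu]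
  simp only [hcast1, hcast0]
  calc |(∫ s in Ioc 0 t, x s ∂G.measure) - ∑ i ∈ Finset.range n,
        x (T * i / n) * (G (u (i+1)) - G (u i))|
      = |∑ i ∈ Finset.range n, ((∫ s in Ioc (u i) (u (i+1)), x s ∂G.measure)
          - x (T * i / n) * (G (u (i+1)) - G (u i)))| := by
        rw [Finset.sum_sub_distrib, ← hsplit n, hu0, hun]
    _ ≤ ∑ i ∈ Finset.range n, |(∫ s in Ioc (u i) (u (i+1)), x s ∂G.measure)
          - x (T * i / n) * (G (u (i+1)) - G (u i))| := Finset.abs_sum_le_sum_abs _ _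
    _ ≤ ∑ i ∈ Finset.range n, ω * (G (u (i+1)) - G (u i)) := Finset.sum_le_sum hterm
    _ = ω * (G t - G 0) := by
        rw [← Finset.mul_sum, Finset.sum_range_sub (fun i => G (u i)), hu0, hun]

end riemann

section scalar2

variable {T : ℝ} (hT : 0 ≤ T) {η : ℝ → ℝ}
  (hfin : eVariationOn η (Icc 0 T) ≠ ⊤) (hηc : Continuous η)

include hηc in
lemma clampFun_continuous : Continuous (clampFun T η) :=
  hηc.comp ((continuous_id.max continuous_const).min continuous_const)

lemma clmp_of_ge {T s : ℝ} (hT : 0 ≤ T) (h : T ≤ s) : clmp T s = T := by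
  simp [clmp, max_eq_left (hT.trans h), min_eq_right h]

include hT in
lemma varFun_constR {s : ℝ} (h : T ≤ s) : varFun T η s = varFun T η T := by
  rw [varFun_eq, varFun_eq, clmp_of_ge hT h, clmp_of_mem (right_mem_Icc.mpr hT)]

include hT in
lemma clampFun_constR {s : ℝ} (h : T ≤ s) : clampFun T η s = clampFun T η T := by
  rw [clampFun_eq, clampFun_eq, clmp_of_ge hT h, clmp_of_mem (right_mem_Icc.mpr hT)]

include hT hfin hηc in
/-- Riemann-sum approximation of `stieltjesIntegral1`. -/
lemma rs_I (hv : Monotone (varFun T η)) (hvc : Monotone (fun u => varFun T η u + clampFun T η u))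
    {x : ℝ → ℝ} (hx : Continuous x) {t : ℝ} (ht : t ∈ Icc 0 T) {n : ℕ} (hn : 1 ≤ n)
    {ω : ℝ} (hω : 0 ≤ ω)
    (hosc : ∀ s r : ℝ, s ∈ Icc 0 T → r ∈ Icc 0 T → |s - r| ≤ T / n → |x s - x r| ≤ ω) :
    |stieltjesIntegral1 T x η t - ∑ i ∈ Finset.range n,
        x (T * i / n) * (clampFun T η (min (T * (i+1) / n) t) - clampFun T η (min (T * i / n) t))|
      ≤ ω * (3 * (eVariationOn η (Icc 0 T)).toReal) := by
  set V := (eVariationOn η (Icc 0 T)).toReal with hV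
  set G₁ := hvc.stieltjesFunction with hG₁
  set G₂ := hv.stieltjesFunction with hG₂
  have hls1 : lsMeasure (fun u => varFun T η u + clampFun T η u) = G₁.measure := dif_pos hvc
  have hls2 : lsMeasure (varFun T η) = G₂.measure := dif_pos hv
  have hGdiff : ∀ u, G₁ u = G₂ u + clampFun T η u :=
    stieltjes_eq_add hv hvc (clampFun_continuous hηc)
  have h1 := rs_single G₁ hx ht hn hosc
  have h2 := rs_single G₂ hx ht hn hosc
  -- mass bounds
  have hvT : varFun T η T ≤ V := varFun_le hT hfin T
  have hG2T : G₂ T = varFun T η T :=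
    stieltjes_eq_self_of_const_right hv (fun s hs => varFun_constR hT hs)
  have hG1T : G₁ T = varFun T η T + clampFun T η T :=
    stieltjes_eq_self_of_const_right hvc (fun s hs => by
      simp only [varFun_constR hT hs, clampFun_constR hT hs])
  have hG2mass : G₂ t - G₂ 0 ≤ V := by
    have ha : G₂ t ≤ G₂ T := G₂.mono ht.2
    have hb : varFun T η 0 ≤ G₂ 0 := stieltjes_ge hv 0
    rw [varFun_zero hT hfin] at hb
    linarith
  have hG1mass : G₁ t - G₁ 0 ≤ 2 * V := by
    have ha : G₁ t ≤ G₁ T := G₁.mono ht.2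
    have hb : G₂ 0 + clampFun T η 0 = G₁ 0 := (hGdiff 0).symm
    have hb' : varFun T η 0 ≤ G₂ 0 := stieltjes_ge hv 0
    rw [varFun_zero hT hfin] at hb'
    have hc := abs_clampFun_sub_le hT hfin hT
    rw [varFun_zero hT hfin] at hc
    have := (abs_le.mp hc).2
    linarith
  -- rewrite the integral
  have hIeq : stieltjesIntegral1 T x η t
      = (∫ s in Ioc 0 t, x s ∂G₁.measure) - ∫ s in Ioc 0 t, x s ∂G₂.measure := by
    simp only [stieltjesIntegral1, hls1, hls2]
  have hsum : (∑ i ∈ Finset.range n,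
        x (T * i / n) * (G₁ (min (T * (i+1) / n) t) - G₁ (min (T * i / n) t)))
      - (∑ i ∈ Finset.range n,
        x (T * i / n) * (G₂ (min (T * (i+1) / n) t) - G₂ (min (T * i / n) t)))
      = ∑ i ∈ Finset.range n,
        x (T * i / n) * (clampFun T η (min (T * (i+1) / n) t)
          - clampFun T η (min (T * i / n) t)) := by
    rw [← Finset.sum_sub_distrib]
    refine Finset.sum_congr rfl fun i _ => ?_
    rw [hGdiff, hGdiff]
    ring
  rw [hIeq, ← hsum]
  set A := ∫ s in Ioc 0 t, x s ∂G₁.measure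
  set B := ∫ s in Ioc 0 t, x s ∂G₂.measure
  set S₁ := ∑ i ∈ Finset.range n,
        x (T * i / n) * (G₁ (min (T * (i+1) / n) t) - G₁ (min (T * i / n) t))
  set S₂ := ∑ i ∈ Finset.range n,
        x (T * i / n) * (G₂ (min (T * (i+1) / n) t) - G₂ (min (T * i / n) t))
  have key : |A - B - (S₁ - S₂)| ≤ |A - S₁| + |B - S₂| := by
    have : A - B - (S₁ - S₂) = (A - S₁) - (B - S₂) := by ring
    rw [this]
    exact abs_sub _ _
  have e1 : ω * (G₁ t - G₁ 0) ≤ ω * (2*V) := mul_le_mul_of_nonneg_left hG1mass hω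
  have e2 : ω * (G₂ t - G₂ 0) ≤ ω * V := mul_le_mul_of_nonneg_left hG2mass hω
  calc |A - B - (S₁ - S₂)| ≤ |A - S₁| + |B - S₂| := key
    _ ≤ ω * (G₁ t - G₁ 0) + ω * (G₂ t - G₂ 0) := add_le_add h1 h2
    _ ≤ ω * (2*V) + ω * V := add_le_add e1 e2
    _ = ω * (3 * V) := by ring


include hT hfin in
lemma G2_mass (hv : Monotone (varFun T η)) {a b : ℝ} (ha : a ∈ Icc 0 T) (hb : b ∈ Icc 0 T) :
    hv.stieltjesFunction b - hv.stieltjesFunction a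
      ≤ (eVariationOn η (Icc 0 T)).toReal := by
  have hG2T : hv.stieltjesFunction T = varFun T η T :=
    stieltjes_eq_self_of_const_right hv (fun s hs => varFun_constR hT hs)
  have h1 : hv.stieltjesFunction b ≤ hv.stieltjesFunction T := hv.stieltjesFunction.mono hb.2
  have h2 : hv.stieltjesFunction 0 ≤ hv.stieltjesFunction a :=
    hv.stieltjesFunction.mono ha.1
  have h3 : varFun T η 0 ≤ hv.stieltjesFunction 0 := stieltjes_ge hv 0
  rw [varFun_zero hT hfin] at h3
  have h4 := varFun_le hT hfin T
  linarith

include hT hfin hηc in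
lemma G1_mass (hv : Monotone (varFun T η))
    (hvc : Monotone (fun u => varFun T η u + clampFun T η u)) {a b : ℝ}
    (ha : a ∈ Icc 0 T) (hb : b ∈ Icc 0 T) :
    hvc.stieltjesFunction b - hvc.stieltjesFunction a
      ≤ 2 * (eVariationOn η (Icc 0 T)).toReal := by
  have hGdiff : ∀ u, hvc.stieltjesFunction u = hv.stieltjesFunction u + clampFun T η u :=
    stieltjes_eq_add hv hvc (clampFun_continuous hηc)
  have hG1T : hvc.stieltjesFunction T = varFun T η T + clampFun T η T :=
    stieltjes_eq_self_of_const_right hvc (fun s hs => by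
      simp only [varFun_constR hT hs, clampFun_constR hT hs])
  have h1 : hvc.stieltjesFunction b ≤ hvc.stieltjesFunction T := hvc.stieltjesFunction.mono hb.2
  have h2 : hvc.stieltjesFunction 0 ≤ hvc.stieltjesFunction a :=
    hvc.stieltjesFunction.mono ha.1
  have h3 : hv.stieltjesFunction 0 + clampFun T η 0 = hvc.stieltjesFunction 0 := (hGdiff 0).symm
  have h3' : varFun T η 0 ≤ hv.stieltjesFunction 0 := stieltjes_ge hv 0
  rw [varFun_zero hT hfin] at h3'
  have hc := abs_clampFun_sub_le hT hfin hT
  rw [varFun_zero hT hfin] at hc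
  have h5 := (abs_le.mp hc).2
  have h4 := varFun_le hT hfin T
  linarith

include hT hfin hηc in
lemma I_diff (hv : Monotone (varFun T η))
    (hvc : Monotone (fun u => varFun T η u + clampFun T η u))
    {x : ℝ → ℝ} (hx : Continuous x) {a b : ℝ} (ha : a ∈ Icc 0 T) (hb : b ∈ Icc 0 T)
    (hab : a ≤ b) {c : ℝ} (hc0 : 0 ≤ c) (hc : ∀ s ∈ Ioc a b, |x s - x a| ≤ c) :
    |stieltjesIntegral1 T x η b - stieltjesIntegral1 T x η a|
      ≤ c * (3 * (eVariationOn η (Icc 0 T)).toReal)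
        + |x a| * |clampFun T η b - clampFun T η a| := by
  set V := (eVariationOn η (Icc 0 T)).toReal with hV
  set G₁ := hvc.stieltjesFunction with hG₁
  set G₂ := hv.stieltjesFunction with hG₂
  have hls1 : lsMeasure (fun u => varFun T η u + clampFun T η u) = G₁.measure := dif_pos hvc
  have hls2 : lsMeasure (varFun T η) = G₂.measure := dif_pos hv
  have hGdiff : ∀ u, G₁ u = G₂ u + clampFun T η u :=
    stieltjes_eq_add hv hvc (clampFun_continuous hηc)
  have hIdiff : stieltjesIntegral1 T x η b - stieltjesIntegral1 T x η a
      = (∫ s in Ioc a b, x s ∂G₁.measure) - ∫ s in Ioc a b, x s ∂G₂.measure := by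
    simp only [stieltjesIntegral1, hls1, hls2]
    rw [integral_Ioc_split G₁ hx ha.1 hab, integral_Ioc_split G₂ hx ha.1 hab]
    ring
  have k1 := key_interval G₁ hx hab hc
  have k2 := key_interval G₂ hx hab hc
  have m1 := G1_mass hT hfin hηc hv hvc ha hb
  have m2 := G2_mass hT hfin hv ha hb
  have hdd : G₁ b - G₁ a - (G₂ b - G₂ a) = clampFun T η b - clampFun T η a := by
    rw [hGdiff, hGdiff]; ring
  rw [hIdiff]
  set A := ∫ s in Ioc a b, x s ∂G₁.measure
  set B := ∫ s in Ioc a b, x s ∂G₂.measure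
  have expand : A - B = (A - x a * (G₁ b - G₁ a)) - (B - x a * (G₂ b - G₂ a))
      + x a * (clampFun T η b - clampFun T η a) := by rw [← hdd]; ring
  have habs : |A - B| ≤ |A - x a * (G₁ b - G₁ a)| + |B - x a * (G₂ b - G₂ a)|
      + |x a * (clampFun T η b - clampFun T η a)| := by
    rw [expand]
    exact (abs_add_le _ _).trans (add_le_add_left (abs_sub _ _) _)
  have e1 : c * (G₁ b - G₁ a) ≤ c * (2 * V) := mul_le_mul_of_nonneg_left m1 hc0
  have e2 : c * (G₂ b - G₂ a) ≤ c * V := mul_le_mul_of_nonneg_left m2 hc0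
  have e3 : |x a * (clampFun T η b - clampFun T η a)|
      = |x a| * |clampFun T η b - clampFun T η a| := abs_mul _ _
  calc |A - B| ≤ _ := habs
    _ ≤ c * (G₁ b - G₁ a) + c * (G₂ b - G₂ a)
        + |x a| * |clampFun T η b - clampFun T η a| := by
        rw [e3] at *; exact add_le_add (add_le_add k1 k2) le_rfl
    _ ≤ c * (2*V) + c * V + |x a| * |clampFun T η b - clampFun T η a| :=
        add_le_add (add_le_add e1 e2) le_rfl
    _ = c * (3 * V) + |x a| * |clampFun T η b - clampFun T η a| := by ring

include hT hfin hηc in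
lemma I_cont (hv : Monotone (varFun T η))
    (hvc : Monotone (fun u => varFun T η u + clampFun T η u))
    {x : ℝ → ℝ} (hx : Continuous x)
    (hxu : ∀ ε > (0:ℝ), ∃ δ > (0:ℝ), ∀ s r : ℝ, |s - r| ≤ δ → |x s - x r| ≤ ε)
    {M : ℝ} (hM : ∀ s, |x s| ≤ M) :
    Continuous (fun t : Icc (0:ℝ) T => stieltjesIntegral1 T x η t) := by
  rw [Metric.continuous_iff]
  intro b ε hε
  set V := (eVariationOn η (Icc 0 T)).toReal with hV
  have hV0 : 0 ≤ V := ENNReal.toReal_nonneg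
  have hM0 : 0 ≤ M := (abs_nonneg _).trans (hM 0)
  obtain ⟨δ₁, hδ₁, hosc⟩ := hxu (ε / (2 * (3 * V + 1))) (by positivity)
  obtain ⟨δ₂, hδ₂, hclamp⟩ := Metric.continuous_iff.mp (clampFun_continuous hηc) (b:ℝ)
    (ε / (2 * (M + 1))) (by positivity)
  refine ⟨min δ₁ δ₂, lt_min hδ₁ hδ₂, fun a hab => ?_⟩
  have hdab : |(a:ℝ) - (b:ℝ)| < min δ₁ δ₂ := by
    simpa [Subtype.dist_eq, Real.dist_eq] using hab
  have key : ∀ p q : Icc (0:ℝ) T, (p:ℝ) ≤ q → |(q:ℝ) - (p:ℝ)| < min δ₁ δ₂ →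
      |clampFun T η q - clampFun T η p| < ε / (2 * (M + 1)) →
      |stieltjesIntegral1 T x η q - stieltjesIntegral1 T x η p| < ε := by
    intro p q hpq hd hcl
    have hosc' : ∀ s ∈ Ioc (p:ℝ) (q:ℝ), |x s - x p| ≤ ε / (2 * (3 * V + 1)) := by
      intro s hs
      refine hosc s p ?_
      rw [abs_le]
      constructor
      · have := hs.1.le; linarith [lt_of_abs_lt (hd.trans_le (min_le_left _ _))]
      · have h1 := hs.2
        have h2 : (q:ℝ) - (p:ℝ) ≤ δ₁ := by
          have := (abs_le.mp (hd.trans_le (min_le_left _ _)).le).2; linarith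
        linarith
    have := I_diff hT hfin hηc hv hvc hx p.2 q.2 hpq (by positivity) hosc'
    have hb1 : ε / (2 * (3 * V + 1)) * (3 * V) < ε / 2 := by
      rw [div_mul_eq_mul_div, div_lt_iff₀ (by positivity)]
      nlinarith
    have hb2 : |x (p:ℝ)| * |clampFun T η q - clampFun T η p| < ε / 2 := by
      calc |x (p:ℝ)| * |clampFun T η q - clampFun T η p|
          ≤ M * |clampFun T η q - clampFun T η p| :=
            mul_le_mul_of_nonneg_right (hM _) (abs_nonneg _)
        _ ≤ M * (ε / (2 * (M + 1))) := mul_le_mul_of_nonneg_left hcl.le hM0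
        _ < ε / 2 := by
            rw [mul_div_assoc']
            rw [div_lt_div_iff₀ (by positivity) (by positivity)]
            nlinarith
    linarith
  rcases le_total (a:ℝ) (b:ℝ) with h | h
  · have hcl : |clampFun T η (b:ℝ) - clampFun T η (a:ℝ)| < ε / (2 * (M + 1)) := by
      have := hclamp (a:ℝ) (by simpa [Real.dist_eq] using hdab.trans_le (min_le_right _ _))
      rw [Real.dist_eq, abs_sub_comm] at this
      exact this
    have := key a b h (by rw [abs_sub_comm]; exact hdab) hcl
    rw [Real.dist_eq, abs_sub_comm]
    exact this
  · have hcl : |clampFun T η (a:ℝ) - clampFun T η (b:ℝ)| < ε / (2 * (M + 1)) := by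
      have := hclamp (a:ℝ) (by simpa [Real.dist_eq] using hdab.trans_le (min_le_right _ _))
      rw [Real.dist_eq] at this
      exact this
    have := key b a h hdab hcl
    rw [Real.dist_eq]
    exact this



include hT hfin in
lemma sum_abs_clamp {t : ℝ} (ht : t ∈ Icc 0 T) (n : ℕ) :
    ∑ i ∈ Finset.range n, |clampFun T η (min (T * (i+1) / n) t) - clampFun T η (min (T * i / n) t)|
      ≤ (eVariationOn η (Icc 0 T)).toReal := by
  set u : ℕ → ℝ := fun i => min (T * i / n) t with hu
  have humono : ∀ i : ℕ, u i ≤ u (i+1) := by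
    intro i
    refine min_le_min ?_ le_rfl
    have h1 : (i:ℝ) ≤ (i:ℝ)+1 := by linarith
    have hT0 : (0:ℝ) ≤ T := ht.1.trans ht.2
    rcases Nat.eq_zero_or_pos n with hn | hn
    · simp [hn]
    · have hn0 : (0:ℝ) < n := by exact_mod_cast hn
      push_cast
      rw [mul_comm T ((i:ℝ)), mul_comm T ((i:ℝ)+1), mul_div_assoc, mul_div_assoc]
      exact mul_le_mul_of_nonneg_right h1 (div_nonneg hT0 hn0.le)
  have hcast1 : ∀ i : ℕ, min (T * ((i:ℝ)+1) / n) t = u (i+1) := fun i => by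
    simp only [hu]; norm_cast
  have hcast0 : ∀ i : ℕ, min (T * (i:ℝ) / n) t = u i := fun i => by simp only [hu]
  simp only [hcast1, hcast0]
  have hterm : ∀ i ∈ Finset.range n, |clampFun T η (u (i+1)) - clampFun T η (u i)|
      ≤ varFun T η (u (i+1)) - varFun T η (u i) := fun i _ =>
    abs_clampFun_sub_le hT hfin (humono i)
  calc ∑ i ∈ Finset.range n, |clampFun T η (u (i+1)) - clampFun T η (u i)|
      ≤ ∑ i ∈ Finset.range n, (varFun T η (u (i+1)) - varFun T η (u i)) :=
        Finset.sum_le_sum hterm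
    _ = varFun T η (u n) - varFun T η (u 0) := Finset.sum_range_sub (fun i => varFun T η (u i)) n
    _ ≤ (eVariationOn η (Icc 0 T)).toReal := by
        have h1 := varFun_le hT hfin (u n)
        have h2 : 0 ≤ varFun T η (u 0) := ENNReal.toReal_nonneg
        linarith

include hT in
/-- The main quantitative scalar estimate. -/
lemma scalar_est {η η₀ : ℝ → ℝ}
    (hfin : eVariationOn η (Icc 0 T) ≠ ⊤) (hfin₀ : eVariationOn η₀ (Icc 0 T) ≠ ⊤)
    (hηc : Continuous η) (hη₀c : Continuous η₀)
    {x x₀ : ℝ → ℝ} (hx : Continuous x) (hx₀ : Continuous x₀)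
    {t : ℝ} (ht : t ∈ Icc 0 T) {n : ℕ} (hn : 1 ≤ n)
    {ω ω₀ : ℝ} (hω : 0 ≤ ω) (hω₀ : 0 ≤ ω₀)
    (hosc : ∀ s r : ℝ, s ∈ Icc 0 T → r ∈ Icc 0 T → |s - r| ≤ T / n → |x s - x r| ≤ ω)
    (hosc₀ : ∀ s r : ℝ, s ∈ Icc 0 T → r ∈ Icc 0 T → |s - r| ≤ T / n → |x₀ s - x₀ r| ≤ ω₀)
    {ν : ℝ} (hνV : (eVariationOn η (Icc 0 T)).toReal ≤ ν)
    (hνV₀ : (eVariationOn η₀ (Icc 0 T)).toReal ≤ ν)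
    {δf : ℝ} (hδf : ∀ s ∈ Icc (0:ℝ) T, |x s - x₀ s| ≤ δf)
    {δg : ℝ} (hδg : ∀ s ∈ Icc (0:ℝ) T, |η s - η₀ s| ≤ δg)
    {M : ℝ} (hM : ∀ s ∈ Icc (0:ℝ) T, |x₀ s| ≤ M) :
    |stieltjesIntegral1 T x η t - stieltjesIntegral1 T x₀ η₀ t|
      ≤ ω * (3*ν) + ω₀ * (3*ν) + δf * ν + M * (2*n*δg) := by
  have hδf0 : 0 ≤ δf := (abs_nonneg _).trans (hδf 0 (left_mem_Icc.mpr hT))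
  have hδg0 : 0 ≤ δg := (abs_nonneg _).trans (hδg 0 (left_mem_Icc.mpr hT))
  have hM0 : 0 ≤ M := (abs_nonneg _).trans (hM 0 (left_mem_Icc.mpr hT))
  have hν0 : 0 ≤ ν := ENNReal.toReal_nonneg.trans hνV
  have r1 := rs_I hT hfin hηc (varFun_mono hT hfin) (varFun_clampFun_mono hT hfin)
    hx ht hn hω hosc
  have r2 := rs_I hT hfin₀ hη₀c (varFun_mono hT hfin₀) (varFun_clampFun_mono hT hfin₀)
    hx₀ ht hn hω₀ hosc₀
  set S := ∑ i ∈ Finset.range n,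
      x (T * i / n) * (clampFun T η (min (T * (i+1) / n) t) - clampFun T η (min (T * i / n) t))
    with hS
  set S₀ := ∑ i ∈ Finset.range n,
      x₀ (T * i / n) * (clampFun T η₀ (min (T * (i+1) / n) t) - clampFun T η₀ (min (T * i / n) t))
    with hS₀
  have hp : ∀ i, i ∈ Finset.range n → T * (i:ℝ) / n ∈ Icc (0:ℝ) T := by
    intro i hi
    rw [Finset.mem_range] at hi
    have hn0 : (0:ℝ) < n := by exact_mod_cast hn
    have hT0 : (0:ℝ) ≤ T := hT
    constructor
    · positivity
    · rw [div_le_iff₀ hn0]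
      have : (i:ℝ) ≤ n := by exact_mod_cast hi.le
      nlinarith
  have hclampdiff : ∀ u : ℝ, |clampFun T η u - clampFun T η₀ u| ≤ δg := by
    intro u
    rw [clampFun_eq, clampFun_eq]
    exact hδg _ (clmp_mem hT u)
  have hSdiff : |S - S₀| ≤ δf * ν + M * (2*n*δg) := by
    have hterm : ∀ i ∈ Finset.range n,
        |x (T * i / n) * (clampFun T η (min (T * (i+1) / n) t) - clampFun T η (min (T * i / n) t))
          - x₀ (T * i / n) * (clampFun T η₀ (min (T * (i+1) / n) t)
            - clampFun T η₀ (min (T * i / n) t))|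
        ≤ δf * |clampFun T η (min (T * (i+1) / n) t) - clampFun T η (min (T * i / n) t)|
          + M * (2*δg) := by
      intro i hi
      set a₁ := clampFun T η (min (T * (i+1) / n) t)
      set a₀ := clampFun T η (min (T * i / n) t)
      set b₁ := clampFun T η₀ (min (T * (i+1) / n) t)
      set b₀ := clampFun T η₀ (min (T * i / n) t)
      have hid : x (T * i / n) * (a₁ - a₀) - x₀ (T * i / n) * (b₁ - b₀)
          = (x (T * i / n) - x₀ (T * i / n)) * (a₁ - a₀)
            + x₀ (T * i / n) * ((a₁ - b₁) - (a₀ - b₀)) := by ring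
      rw [hid]
      have h1 : |(x (T * i / n) - x₀ (T * i / n)) * (a₁ - a₀)| ≤ δf * |a₁ - a₀| := by
        rw [abs_mul]
        exact mul_le_mul_of_nonneg_right (hδf _ (hp i hi)) (abs_nonneg _)
      have h2 : |x₀ (T * i / n) * ((a₁ - b₁) - (a₀ - b₀))| ≤ M * (2*δg) := by
        rw [abs_mul]
        have hA : |a₁ - b₁| ≤ δg := hclampdiff _
        have hB : |a₀ - b₀| ≤ δg := hclampdiff _
        have : |(a₁ - b₁) - (a₀ - b₀)| ≤ 2*δg := by
          calc |(a₁ - b₁) - (a₀ - b₀)| ≤ |a₁ - b₁| + |a₀ - b₀| := abs_sub _ _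
            _ ≤ 2*δg := by linarith
        exact mul_le_mul (hM _ (hp i hi)) this (abs_nonneg _) hM0
      exact (abs_add_le _ _).trans (add_le_add h1 h2)
    calc |S - S₀| = |∑ i ∈ Finset.range n, (x (T * i / n)
          * (clampFun T η (min (T * (i+1) / n) t) - clampFun T η (min (T * i / n) t))
          - x₀ (T * i / n) * (clampFun T η₀ (min (T * (i+1) / n) t)
            - clampFun T η₀ (min (T * i / n) t)))| := by
          rw [hS, hS₀, Finset.sum_sub_distrib]
      _ ≤ ∑ i ∈ Finset.range n, |x (T * i / n)
          * (clampFun T η (min (T * (i+1) / n) t) - clampFun T η (min (T * i / n) t))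
          - x₀ (T * i / n) * (clampFun T η₀ (min (T * (i+1) / n) t)
            - clampFun T η₀ (min (T * i / n) t))| := Finset.abs_sum_le_sum_abs _ _
      _ ≤ ∑ i ∈ Finset.range n, (δf * |clampFun T η (min (T * (i+1) / n) t)
            - clampFun T η (min (T * i / n) t)| + M * (2*δg)) := Finset.sum_le_sum hterm
      _ = δf * (∑ i ∈ Finset.range n, |clampFun T η (min (T * (i+1) / n) t)
            - clampFun T η (min (T * i / n) t)|) + n * (M * (2*δg)) := by
          rw [Finset.sum_add_distrib, ← Finset.mul_sum, Finset.sum_const, Finset.card_range,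
            nsmul_eq_mul]
      _ ≤ δf * ν + M * (2*n*δg) := by
          have := sum_abs_clamp hT hfin ht n
          have h2 : δf * (∑ i ∈ Finset.range n, |clampFun T η (min (T * (i+1) / n) t)
              - clampFun T η (min (T * i / n) t)|) ≤ δf * ν :=
            mul_le_mul_of_nonneg_left (this.trans hνV) hδf0
          have h3 : (n:ℝ) * (M * (2*δg)) = M * (2*n*δg) := by ring
          linarith
  have c1 : ω * (3 * (eVariationOn η (Icc 0 T)).toReal) ≤ ω * (3*ν) := by
    apply mul_le_mul_of_nonneg_left _ hω; linarith
  have c2 : ω₀ * (3 * (eVariationOn η₀ (Icc 0 T)).toReal) ≤ ω₀ * (3*ν) := by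
    apply mul_le_mul_of_nonneg_left _ hω₀; linarith
  calc |stieltjesIntegral1 T x η t - stieltjesIntegral1 T x₀ η₀ t|
      = |(stieltjesIntegral1 T x η t - S) - (stieltjesIntegral1 T x₀ η₀ t - S₀) + (S - S₀)| := by
        ring_nf
    _ ≤ |stieltjesIntegral1 T x η t - S| + |stieltjesIntegral1 T x₀ η₀ t - S₀| + |S - S₀| := by
        refine (abs_add_le _ _).trans (add_le_add ?_ le_rfl)
        exact abs_sub _ _
    _ ≤ ω * (3*ν) + ω₀ * (3*ν) + (δf * ν + M * (2*n*δg)) := by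
        have := r1.trans c1
        have := r2.trans c2
        linarith [r1.trans c1, r2.trans c2, hSdiff]
    _ = ω * (3*ν) + ω₀ * (3*ν) + δf * ν + M * (2*n*δg) := by ring

end scalar2

section vector

variable {d : ℕ} {T : ℝ}

lemma coord_abs_le_norm (x : EuclideanSpace ℝ (Fin d)) (i : Fin d) : |x i| ≤ ‖x‖ := by
  rw [EuclideanSpace.norm_eq]
  calc |x i| = Real.sqrt (‖x i‖^2) := by
        rw [Real.sqrt_sq_eq_abs, Real.norm_eq_abs, abs_abs]
    _ ≤ Real.sqrt (∑ j, ‖x j‖^2) := Real.sqrt_le_sqrt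
        (Finset.single_le_sum (f := fun j => ‖x j‖^2) (fun j _ => sq_nonneg _) (Finset.mem_univ i))

lemma lip_coord (i : Fin d) : LipschitzWith 1 (fun v : EuclideanSpace ℝ (Fin d) => v i) := by
  refine LipschitzWith.of_dist_le_mul fun a b => ?_
  rw [NNReal.coe_one, one_mul, Real.dist_eq, dist_eq_norm]
  have : a i - b i = (a - b) i := rfl
  rw [this]
  exact coord_abs_le_norm (a - b) i

variable (hT : (0:ℝ) ≤ T)

lemma evar_coord_le (g : C(Icc (0:ℝ) T, EuclideanSpace ℝ (Fin d))) (i : Fin d) :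
    eVariationOn (fun s => IccExtend hT (⇑g) s i) (Icc 0 T)
      ≤ eVariationOn (⇑g) (univ : Set (Icc (0:ℝ) T)) := by
  have h1 := LipschitzOnWith.comp_eVariationOn_le
      ((lip_coord i).lipschitzOnWith (s := (univ : Set (EuclideanSpace ℝ (Fin d)))))
      (mapsTo_univ (IccExtend hT ⇑g) (Icc (0:ℝ) T))
  have h1' : eVariationOn ((fun v : EuclideanSpace ℝ (Fin d) => v i) ∘ (IccExtend hT ⇑g))
      (Icc (0:ℝ) T) ≤ eVariationOn (IccExtend hT ⇑g) (Icc (0:ℝ) T) := by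
    simpa using h1
  have h2 : eVariationOn (IccExtend hT ⇑g) (Icc (0:ℝ) T)
      = eVariationOn (⇑g) (univ : Set (Icc (0:ℝ) T)) := by
    have heq : IccExtend hT ⇑g = ⇑g ∘ projIcc 0 T hT := rfl
    rw [heq, eVariationOn.comp_eq_of_monotoneOn ⇑g _ ((monotone_projIcc hT).monotoneOn _)]
    congr 1
    exact subset_antisymm (subset_univ _) (fun y _ => (projIcc_surjOn hT) (mem_univ y))
  exact le_of_le_of_eq h1' h2

lemma coord_cont (g : C(Icc (0:ℝ) T, EuclideanSpace ℝ (Fin d))) (i : Fin d) :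
    Continuous (fun s => IccExtend hT (⇑g) s i) :=
  ((lip_coord i).continuous).comp (g.continuous.comp continuous_projIcc)

lemma coord_modulus (f : C(Icc (0:ℝ) T, EuclideanSpace ℝ (Fin d))) :
    ∀ ε > (0:ℝ), ∃ δ > (0:ℝ), ∀ s r : ℝ, |s - r| ≤ δ →
      ‖IccExtend hT (⇑f) s - IccExtend hT (⇑f) r‖ ≤ ε := by
  intro ε hε
  have hu : UniformContinuous (IccExtend hT ⇑f) :=
    (CompactSpace.uniformContinuous_of_continuous f.continuous).comp
      (LipschitzWith.projIcc hT).uniformContinuous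
  obtain ⟨δ, hδ, h⟩ := Metric.uniformContinuous_iff.mp hu ε hε
  refine ⟨δ/2, by linarith, fun s r hsr => ?_⟩
  have : dist s r < δ := by rw [Real.dist_eq]; linarith
  have := h this
  rw [dist_eq_norm] at this
  exact this.le

include hT in
lemma exists_z (f g : C(Icc (0:ℝ) T, EuclideanSpace ℝ (Fin d)))
    (hg : BoundedVariationOn (⇑g) (univ : Set (Icc (0:ℝ) T))) :
    ∃ z : C(Icc (0:ℝ) T, ℝ), ∀ t : Icc (0:ℝ) T,
      z t = stieltjesIntegral T (IccExtend hT f) (IccExtend hT g) t := by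
  have hcont : Continuous (fun t : Icc (0:ℝ) T =>
      stieltjesIntegral T (IccExtend hT f) (IccExtend hT g) t) := by
    simp only [stieltjesIntegral]
    refine continuous_finset_sum _ fun i _ => ?_
    have hfin : eVariationOn (fun s => IccExtend hT (⇑g) s i) (Icc 0 T) ≠ ⊤ :=
      ne_top_of_le_ne_top hg (evar_coord_le hT g i)
    have hηc : Continuous (fun s => IccExtend hT (⇑g) s i) := coord_cont hT g i
    have hxc : Continuous (fun s => IccExtend hT (⇑f) s i) := coord_cont hT f i
    have hxu : ∀ ε > (0:ℝ), ∃ δ > (0:ℝ), ∀ s r : ℝ, |s - r| ≤ δ →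
        |IccExtend hT (⇑f) s i - IccExtend hT (⇑f) r i| ≤ ε := by
      intro ε hε
      obtain ⟨δ, hδ, h⟩ := coord_modulus hT f ε hε
      refine ⟨δ, hδ, fun s r hsr => ?_⟩
      have h2 := h s r hsr
      have h3 : |IccExtend hT (⇑f) s i - IccExtend hT (⇑f) r i|
          ≤ ‖IccExtend hT (⇑f) s - IccExtend hT (⇑f) r‖ := by
        have : IccExtend hT (⇑f) s i - IccExtend hT (⇑f) r i
            = (IccExtend hT (⇑f) s - IccExtend hT (⇑f) r) i := rfl
        rw [this]
        exact coord_abs_le_norm _ i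
      exact h3.trans h2
    have hM : ∀ s : ℝ, |IccExtend hT (⇑f) s i| ≤ ‖f‖ := fun s => by
      calc |IccExtend hT (⇑f) s i| ≤ ‖IccExtend hT (⇑f) s‖ := coord_abs_le_norm _ i
        _ ≤ ‖f‖ := f.norm_coe_le_norm _
    exact I_cont hT hfin hηc (varFun_mono hT hfin) (varFun_clampFun_mono hT hfin)
      hxc hxu hM
  exact ⟨⟨_, hcont⟩, fun t => rfl⟩

include hT in
lemma lambdaMap_eq (f g : C(Icc (0:ℝ) T, EuclideanSpace ℝ (Fin d)))
    (hg : BoundedVariationOn (⇑g) (univ : Set (Icc (0:ℝ) T))) (t : Icc (0:ℝ) T) :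
    lambdaMap hT f g t = stieltjesIntegral T (IccExtend hT f) (IccExtend hT g) t := by
  have hex := exists_z hT f g hg
  rw [lambdaMap, dif_pos hex]
  exact hex.choose_spec t

end vector


set_option maxHeartbeats 1000000 in
/-- With `W = C([0,T];ℝ^d)` and
`V_ν = {η ∈ W : η of bounded variation, ‖η‖_BV ≤ ν}`, the map
`Λ(x,η) = (t ↦ ∫_0^t ⟨x(s), dη(s)⟩)` (set to `0` off bounded-variation paths) is
continuous on `W × V_ν`, for each `ν > 0`. -/
theorem stmt7 {d : ℕ} (T : ℝ) (hT : (0:ℝ) ≤ T) (ν : ℝ) (hν : 0 < ν) :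
    ContinuousOn
      (fun p : C(Icc (0:ℝ) T, EuclideanSpace ℝ (Fin d)) ×
          C(Icc (0:ℝ) T, EuclideanSpace ℝ (Fin d)) => lambdaMap hT p.1 p.2)
      ((univ : Set C(Icc (0:ℝ) T, EuclideanSpace ℝ (Fin d))) ×ˢ
        {g : C(Icc (0:ℝ) T, EuclideanSpace ℝ (Fin d)) |
          BoundedVariationOn (⇑g) (univ : Set (Icc (0:ℝ) T)) ∧ bvNormC hT g ≤ ν}) := by
  rw [Metric.continuousOn_iff]
  rintro ⟨f₀, g₀⟩ ⟨-, hg₀BV, hg₀ν⟩ ε hε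
  set M : ℝ := ‖f₀‖ + 1 with hMdef
  have hM0 : 0 < M := by positivity
  set ε₁ : ℝ := ε / (32 * (d+1) * (ν+1)) with hε₁def
  have hε₁ : 0 < ε₁ := by positivity
  obtain ⟨δ₀, hδ₀, hmod⟩ := coord_modulus hT f₀ ε₁ hε₁
  set n : ℕ := max 1 ⌈T/δ₀⌉₊ with hndef
  have hn : 1 ≤ n := le_max_left _ _
  have hnR : (0:ℝ) < n := by exact_mod_cast Nat.lt_of_lt_of_le Nat.zero_lt_one hn
  have hmesh : T / n ≤ δ₀ := by
    rw [div_le_iff₀ hnR]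
    have h1 : T / δ₀ ≤ (⌈T/δ₀⌉₊ : ℝ) := Nat.le_ceil _
    have h2 : ((⌈T/δ₀⌉₊ : ℕ) : ℝ) ≤ n := by exact_mod_cast le_max_right 1 ⌈T/δ₀⌉₊
    calc T = (T/δ₀) * δ₀ := by field_simp
      _ ≤ δ₀ * n := by nlinarith
  set δ₁ : ℝ := min ε₁ (ε / (32 * (d+1) * (M * n + ν + 1))) with hδ₁def
  have hδ₁ : 0 < δ₁ := lt_min hε₁ (by positivity)
  refine ⟨δ₁, hδ₁, ?_⟩
  rintro ⟨f, g⟩ ⟨-, hgBV, hgν⟩ hdist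
  have hdf : dist f f₀ ≤ δ₁ := by
    refine le_trans ?_ hdist.le
    rw [Prod.dist_eq]; exact le_max_left _ _
  have hdg : dist g g₀ ≤ δ₁ := by
    refine le_trans ?_ hdist.le
    rw [Prod.dist_eq]; exact le_max_right _ _
  -- pointwise coordinate bounds
  have hptf : ∀ (i : Fin d) (s : ℝ),
      |IccExtend hT (⇑f) s i - IccExtend hT (⇑f₀) s i| ≤ δ₁ := by
    intro i s
    have h1 : |IccExtend hT (⇑f) s i - IccExtend hT (⇑f₀) s i|
        ≤ ‖IccExtend hT (⇑f) s - IccExtend hT (⇑f₀) s‖ := by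
      have : IccExtend hT (⇑f) s i - IccExtend hT (⇑f₀) s i
          = (IccExtend hT (⇑f) s - IccExtend hT (⇑f₀) s) i := rfl
      rw [this]; exact coord_abs_le_norm _ i
    refine h1.trans ?_
    rw [← dist_eq_norm]
    exact (ContinuousMap.dist_apply_le_dist _).trans hdf
  have hptg : ∀ (i : Fin d) (s : ℝ),
      |IccExtend hT (⇑g) s i - IccExtend hT (⇑g₀) s i| ≤ δ₁ := by
    intro i s
    have h1 : |IccExtend hT (⇑g) s i - IccExtend hT (⇑g₀) s i|
        ≤ ‖IccExtend hT (⇑g) s - IccExtend hT (⇑g₀) s‖ := by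
      have : IccExtend hT (⇑g) s i - IccExtend hT (⇑g₀) s i
          = (IccExtend hT (⇑g) s - IccExtend hT (⇑g₀) s) i := rfl
      rw [this]; exact coord_abs_le_norm _ i
    refine h1.trans ?_
    rw [← dist_eq_norm]
    exact (ContinuousMap.dist_apply_le_dist _).trans hdg
  -- variation bounds
  have hvarν : ∀ (g' : C(Icc (0:ℝ) T, EuclideanSpace ℝ (Fin d))),
      BoundedVariationOn (⇑g') (univ : Set (Icc (0:ℝ) T)) → bvNormC hT g' ≤ ν →
      ∀ i : Fin d, (eVariationOn (fun s => IccExtend hT (⇑g') s i) (Icc 0 T)).toReal ≤ ν := by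
    intro g' hBV hν' i
    have h1 : (eVariationOn (⇑g') (univ : Set (Icc (0:ℝ) T))).toReal ≤ ν := by
      rw [bvNormC] at hν'
      have := norm_nonneg (g' ⟨0, left_mem_Icc.mpr hT⟩)
      linarith
    have h2 : (eVariationOn (fun s => IccExtend hT (⇑g') s i) (Icc 0 T)).toReal
        ≤ (eVariationOn (⇑g') (univ : Set (Icc (0:ℝ) T))).toReal :=
      ENNReal.toReal_mono hBV (evar_coord_le hT g' i)
    linarith
  set B : ℝ := (ε₁ + 2*δ₁) * (3*ν) + ε₁ * (3*ν) + δ₁ * ν + M * (2*n*δ₁) with hBdef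
  -- the per-coordinate estimate
  have hcoord : ∀ (i : Fin d) (t : Icc (0:ℝ) T),
      |stieltjesIntegral1 T (fun s => IccExtend hT (⇑f) s i)
          (fun s => IccExtend hT (⇑g) s i) t
        - stieltjesIntegral1 T (fun s => IccExtend hT (⇑f₀) s i)
          (fun s => IccExtend hT (⇑g₀) s i) t| ≤ B := by
    intro i t
    have hfin : eVariationOn (fun s => IccExtend hT (⇑g) s i) (Icc 0 T) ≠ ⊤ :=
      ne_top_of_le_ne_top hgBV (evar_coord_le hT g i)
    have hfin₀ : eVariationOn (fun s => IccExtend hT (⇑g₀) s i) (Icc 0 T) ≠ ⊤ :=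
      ne_top_of_le_ne_top hg₀BV (evar_coord_le hT g₀ i)
    have hosc₀ : ∀ s r : ℝ, s ∈ Icc (0:ℝ) T → r ∈ Icc (0:ℝ) T → |s - r| ≤ T / n →
        |IccExtend hT (⇑f₀) s i - IccExtend hT (⇑f₀) r i| ≤ ε₁ := by
      intro s r _ _ hsr
      have h1 := hmod s r (hsr.trans hmesh)
      have h2 : |IccExtend hT (⇑f₀) s i - IccExtend hT (⇑f₀) r i|
          ≤ ‖IccExtend hT (⇑f₀) s - IccExtend hT (⇑f₀) r‖ := by
        have : IccExtend hT (⇑f₀) s i - IccExtend hT (⇑f₀) r i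
            = (IccExtend hT (⇑f₀) s - IccExtend hT (⇑f₀) r) i := rfl
        rw [this]; exact coord_abs_le_norm _ i
      exact h2.trans h1
    have hosc : ∀ s r : ℝ, s ∈ Icc (0:ℝ) T → r ∈ Icc (0:ℝ) T → |s - r| ≤ T / n →
        |IccExtend hT (⇑f) s i - IccExtend hT (⇑f) r i| ≤ ε₁ + 2*δ₁ := by
      intro s r hs hr hsr
      have h0 := hosc₀ s r hs hr hsr
      have h1 := hptf i s
      have h2 := hptf i r
      have : IccExtend hT (⇑f) s i - IccExtend hT (⇑f) r i
          = (IccExtend hT (⇑f) s i - IccExtend hT (⇑f₀) s i)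
            + (IccExtend hT (⇑f₀) s i - IccExtend hT (⇑f₀) r i)
            - (IccExtend hT (⇑f) r i - IccExtend hT (⇑f₀) r i) := by ring
      rw [this]
      have := abs_le.mp h0
      have := abs_le.mp h1
      have := abs_le.mp h2
      rw [abs_le]
      constructor <;> linarith [(abs_le.mp h0).1, (abs_le.mp h0).2, (abs_le.mp h1).1,
        (abs_le.mp h1).2, (abs_le.mp h2).1, (abs_le.mp h2).2]
    have hMb : ∀ s ∈ Icc (0:ℝ) T, |IccExtend hT (⇑f₀) s i| ≤ M := by
      intro s _
      calc |IccExtend hT (⇑f₀) s i| ≤ ‖IccExtend hT (⇑f₀) s‖ := coord_abs_le_norm _ i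
        _ ≤ ‖f₀‖ := f₀.norm_coe_le_norm _
        _ ≤ M := by rw [hMdef]; linarith
    exact scalar_est hT hfin hfin₀ (coord_cont hT g i) (coord_cont hT g₀ i)
      (coord_cont hT f i) (coord_cont hT f₀ i) t.2 hn
      (by positivity) hε₁.le hosc hosc₀
      (hvarν g hgBV hgν i) (hvarν g₀ hg₀BV hg₀ν i)
      (fun s _ => hptf i s) (fun s _ => hptg i s) hMb
  -- numeric bound
  have hBbound : (d : ℝ) * B < ε := by
    have hδ₁ε₁ : δ₁ ≤ ε₁ := min_le_left _ _
    have key1 : ε₁ * (ν+1) = ε / (32*(d+1)) := by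
      rw [hε₁def]; field_simp
    have key2 : δ₁ * (M * n + ν + 1) ≤ ε / (32*(d+1)) := by
      have h1 : δ₁ ≤ ε / (32 * (d+1) * (M * n + ν + 1)) := min_le_right _ _
      have h2 : (0:ℝ) < M * n + ν + 1 := by positivity
      calc δ₁ * (M * n + ν + 1) ≤ ε / (32 * (d+1) * (M * n + ν + 1)) * (M * n + ν + 1) :=
            mul_le_mul_of_nonneg_right h1 h2.le
        _ = ε / (32*(d+1)) := by field_simp
    have hεν : ε₁ * ν ≤ ε / (32*(d+1)) := by nlinarith
    have hB14 : B ≤ 14 * (ε / (32*(d+1))) := by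
      have e1 : (ε₁ + 2*δ₁) * (3*ν) ≤ 9 * (ε₁ * ν) := by nlinarith
      have e2 : ε₁ * (3*ν) = 3 * (ε₁ * ν) := by ring
      have e3 : δ₁ * ν + M * (2*n*δ₁) ≤ 2 * (δ₁ * (M * n + ν + 1)) := by nlinarith
      rw [hBdef]
      nlinarith
    have hd : (14:ℝ) * (d:ℝ) < 32 * ((d:ℝ)+1) := by
      have : (0:ℝ) ≤ (d:ℝ) := Nat.cast_nonneg d
      linarith
    have hB0 : 0 ≤ B := by
      rw [hBdef]; positivity
    have hdB : (d:ℝ) * B ≤ (d:ℝ) * (14 * (ε / (32*((d:ℝ)+1)))) :=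
      mul_le_mul_of_nonneg_left hB14 (Nat.cast_nonneg d)
    have ha : 0 < ε / (32*((d:ℝ)+1)) := by positivity
    calc (d:ℝ) * B ≤ (d:ℝ) * (14 * (ε / (32*((d:ℝ)+1)))) := hdB
      _ = (14 * (d:ℝ)) * (ε / (32*((d:ℝ)+1))) := by ring
      _ < (32*((d:ℝ)+1)) * (ε / (32*((d:ℝ)+1))) := mul_lt_mul_of_pos_right hd ha
      _ = ε := by field_simp
  -- conclude
  rw [ContinuousMap.dist_lt_iff hε]
  intro t
  rw [lambdaMap_eq hT f g hgBV t, lambdaMap_eq hT f₀ g₀ hg₀BV t, Real.dist_eq]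
  simp only [stieltjesIntegral]
  rw [← Finset.sum_sub_distrib]
  calc |∑ i : Fin d, (stieltjesIntegral1 T (fun s => IccExtend hT (⇑f) s i)
          (fun s => IccExtend hT (⇑g) s i) t
        - stieltjesIntegral1 T (fun s => IccExtend hT (⇑f₀) s i)
          (fun s => IccExtend hT (⇑g₀) s i) t)|
      ≤ ∑ i : Fin d, |stieltjesIntegral1 T (fun s => IccExtend hT (⇑f) s i)
          (fun s => IccExtend hT (⇑g) s i) t
        - stieltjesIntegral1 T (fun s => IccExtend hT (⇑f₀) s i)
          (fun s => IccExtend hT (⇑g₀) s i) t| := Finset.abs_sum_le_sum_abs _ _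
    _ ≤ ∑ _i : Fin d, B := Finset.sum_le_sum (fun i _ => hcoord i t)
    _ = (d:ℝ) * B := by
        rw [Finset.sum_const, Finset.card_univ, Fintype.card_fin, nsmul_eq_mul]
    _ < ε := hBbound

end
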